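/- If j is a strong critical ancestor of i, then the critical descendant set of i is contained in the critical descendant set of j: V_i ⊆ V_j. -/
import Mathlib


/-- The set of buyers still connected to the seller `s` after removing the set `D`:
vertices `y ≠ s`, `y ∉ D`, admitting a walk from `s` avoiding `D`. -/
def remConn {V : Type*} (G : SimpleGraph V) (s : V) (D : Set V) : Set V :=
  {y | y ≠ s ∧ y ∉ D ∧ ∃ p : G.Walk s y, ∀ d ∈ D, d ∉ p.support}

/-- The highest reported valuation among buyers still connected to `s` after removing `D`
(`0` if there are none). -/
noncomputable def v1 {V : Type*} (G : SimpleGraph V) (s : V) (v : V → ℝ) (D : Set V) : ℝ :=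
  sSup (insert 0 (v '' remConn G s D))

/-- `D` is a cut set of buyer `i`: every walk from the seller `s` to `i` meets `D`. -/
def isCutSet {V : Type*} (G : SimpleGraph V) (s i : V) (D : Set V) : Prop :=
  ∀ p : G.Walk s i, ∃ d ∈ D, d ∈ p.support

/-- `j` is a strong critical ancestor of `i`: `j` is a buyer distinct from `i`
lying on every walk from the seller `s` to `i`. -/
def isSCA {V : Type*} (G : SimpleGraph V) (s i j : V) : Prop :=
  j ≠ i ∧ j ≠ s ∧ ∀ p : G.Walk s i, j ∈ p.support

/-- The critical descendant set of `x`: buyers `y` such that every walk from `s` to `y`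
passes through `x`, together with `x` itself. -/
def critDesc {V : Type*} (G : SimpleGraph V) (s x : V) : Set V :=
  {y | ∀ p : G.Walk s y, x ∈ p.support} ∪ {x}

/-- If `j` is a strong critical ancestor of `i`, then the critical descendant set of `i`
is contained in that of `j`. -/
theorem critDesc_subset_of_sca {V : Type*} [Fintype V]
    (G : SimpleGraph V) (s i j : V) (hji : isSCA G s i j) :
    critDesc G s i ⊆ critDesc G s j := by
  classical
  obtain ⟨hjine, hjs, hj⟩ := hji
  intro y hy
  rcases hy with hy | hy
  · left
    intro p
    have hi : i ∈ p.support := hy p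
    have := hj (p.takeUntil i hi)
    exact SimpleGraph.Walk.support_takeUntil_subset p hi this
  · simp only [Set.mem_singleton_iff] at hy
    subst hy
    left
    exact hj
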